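/- The total number of records over all rooted labeled trees on {1,...,n} equals the number of connected endofunctions on {1,...,n}. -/

import Mathlib

def IsTreeFun {n : ℕ} (f : Fin n → Fin n) : Prop :=
  ∃ r, f r = r ∧ ∀ v, ∃ k, f^[k] v = r

def IsRec {n : ℕ} (f : Fin n → Fin n) (v : Fin n) : Prop :=
  ∀ k, f^[k] v ≤ v

def ConnFun {n : ℕ} (f : Fin n → Fin n) : Prop :=
  Nonempty (Fin n) ∧ ∀ i j, Relation.EqvGen (fun a b => f a = b) i j


private lemma iter_reach {α : Type*} (g h : α → α) (r : α)
    (hgh : ∀ y, y ≠ r → g y = h y) :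
    ∀ k x, g^[k] x = r → ∃ j, h^[j] x = r := by
  intro k
  induction k with
  | zero => intro x hx; exact ⟨0, hx⟩
  | succ k ih =>
    intro x hx
    by_cases hxr : x = r
    · exact ⟨0, hxr⟩
    · rw [Function.iterate_succ_apply] at hx
      obtain ⟨j, hj⟩ := ih (g x) hx
      refine ⟨j + 1, ?_⟩
      rw [Function.iterate_succ_apply, ← hgh x hxr]
      exact hj

private lemma periodic_inj {α : Type*} (F : α → α) {x y : α} {a b : ℕ}
    (ha : 0 < a) (hb : 0 < b) (hxa : F^[a] x = x) (hyb : F^[b] y = y)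
    (h : F x = F y) : x = y := by
  have hx : F^[a * b] x = x := by
    rw [Function.iterate_mul]; exact Function.iterate_fixed hxa b
  have hy : F^[a * b] y = y := by
    rw [mul_comm, Function.iterate_mul]; exact Function.iterate_fixed hyb a
  obtain ⟨c, hc⟩ : ∃ c, a * b = c + 1 := ⟨a * b - 1, (Nat.succ_pred_eq_of_pos (Nat.mul_pos ha hb)).symm⟩
  rw [hc] at hx hy
  rw [Function.iterate_succ_apply, h, ← Function.iterate_succ_apply] at hx
  rw [← hx, hy]

private lemma eqvgen_iter {α : Type*} (F : α → α) {x y : α}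
    (h : Relation.EqvGen (fun a b => F a = b) x y) :
    ∃ a b, F^[a] x = F^[b] y := by
  induction h with
  | rel a b hab => exact ⟨1, 0, hab⟩
  | refl a => exact ⟨0, 0, rfl⟩
  | symm a b _ ih => obtain ⟨p, q, h⟩ := ih; exact ⟨q, p, h.symm⟩
  | trans a b c _ _ ih1 ih2 =>
    obtain ⟨p, q, h1⟩ := ih1
    obtain ⟨s, t, h2⟩ := ih2
    refine ⟨s + p, q + t, ?_⟩
    calc F^[s + p] a = F^[s] (F^[p] a) := Function.iterate_add_apply ..
      _ = F^[s] (F^[q] b) := by rw [h1]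
      _ = F^[q] (F^[s] b) := by
        rw [← Function.iterate_add_apply, Nat.add_comm, Function.iterate_add_apply]
      _ = F^[q] (F^[t] c) := by rw [h2]
      _ = F^[q + t] c := (Function.iterate_add_apply ..).symm

private lemma eqvgen_of_iter {α : Type*} (F : α → α) : ∀ (k : ℕ) (x : α),
    Relation.EqvGen (fun a b => F a = b) x (F^[k] x) := by
  intro k
  induction k with
  | zero => intro x; exact Relation.EqvGen.refl x
  | succ k ih =>
    intro x
    rw [Function.iterate_succ_apply]
    exact (Relation.EqvGen.rel x (F x) (rfl : F x = F x)).trans _ _ _ (ih (F x))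


/-- Update at the root makes the graph connected. -/
private lemma conn_update {n : ℕ} (f : Fin n → Fin n) (r v : Fin n)
    (hreach : ∀ x, ∃ k, f^[k] x = r) :
    ConnFun (Function.update f r v) := by
  refine ⟨⟨r⟩, fun i j => ?_⟩
  set F := Function.update f r v with hF
  have key : ∀ x, Relation.EqvGen (fun a b => F a = b) x r := by
    intro x
    obtain ⟨k, hk⟩ := hreach x
    obtain ⟨j, hj⟩ := iter_reach f F r
      (fun y hy => (Function.update_of_ne hy v f).symm) k x hk
    rw [← hj]
    exact eqvgen_of_iter F j x
  exact (key i).trans _ _ _ ((key j).symm _ _)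

/-- Properties of `F = update f r v` for a tree `f` rooted at `r` with record `v`:
`v` is the maximum periodic point of `F`, and `r` is periodic with `F r = v`. -/
private lemma rec_max {n : ℕ} (f : Fin n → Fin n) (r v : Fin n)
    (hr : f r = r) (hreach : ∀ x, ∃ k, f^[k] x = r) (hrec : IsRec f v) :
    (∃ k, 0 < k ∧ (Function.update f r v)^[k] v = v) ∧
    (∀ x : Fin n, (∃ c, 0 < c ∧ (Function.update f r v)^[c] x = x) → x ≤ v) ∧
    (∃ k, 0 < k ∧ (Function.update f r v)^[k] r = r) := by
  set F := Function.update f r v with hFdef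
  have hFr : F r = v := Function.update_self r v f
  have hFne : ∀ y, y ≠ r → F y = f y := fun y hy => Function.update_of_ne hy v f
  -- everything reaches r under F
  have Freach : ∀ x, ∃ j, F^[j] x = r := by
    intro x
    obtain ⟨k, hk⟩ := hreach x
    exact iter_reach f F r (fun y hy => (hFne y hy).symm) k x hk
  -- F-iterates of v are f-iterates of v
  have orbit : ∀ d, ∃ e, F^[d] v = f^[e] v := by
    intro d
    induction d with
    | zero => exact ⟨0, rfl⟩
    | succ d ih =>
      obtain ⟨e, he⟩ := ih
      rw [Function.iterate_succ_apply', he]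
      by_cases h : f^[e] v = r
      · rw [h, hFr]; exact ⟨0, rfl⟩
      · rw [hFne _ h]; exact ⟨e + 1, (Function.iterate_succ_apply' f e v).symm⟩
  obtain ⟨j₀, hj₀⟩ := Freach v
  refine ⟨⟨j₀ + 1, Nat.succ_pos _, by
      rw [Function.iterate_succ_apply', hj₀, hFr]⟩, ?_, ?_⟩
  · intro x ⟨c, hc, hcx⟩
    obtain ⟨j, hj⟩ := Freach x
    -- x = F^[c*(j+1)] x passes through r, hence lies on the F-orbit of v
    have hx : ∀ t, F^[c * t] x = x := by
      intro t
      rw [Function.iterate_mul]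
      exact Function.iterate_fixed hcx t
    have hT : j + 1 ≤ c * (j + 1) := Nat.le_mul_of_pos_left _ hc
    have h1 : F^[c * (j + 1) - j] r = x := by
      have : F^[(c * (j + 1) - j) + j] x = x := by
        rw [Nat.sub_add_cancel (le_trans (Nat.le_succ j) hT)]
        exact hx (j + 1)
      rw [Function.iterate_add_apply, hj] at this
      exact this
    obtain ⟨s, hs⟩ : ∃ s, c * (j + 1) - j = s + 1 := ⟨c * (j + 1) - j - 1, by omega⟩
    rw [hs, Function.iterate_succ_apply, hFr] at h1
    obtain ⟨e, he⟩ := orbit s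
    rw [he] at h1
    rw [← h1]
    exact hrec e
  · refine ⟨j₀ + 1, Nat.succ_pos _, ?_⟩
    rw [Function.iterate_succ_apply, hFr, hj₀]

private noncomputable def phiFun (n : ℕ)
    (p : {p : (Fin n → Fin n) × Fin n // IsTreeFun p.1 ∧ IsRec p.1 p.2}) :
    {f : Fin n → Fin n // ConnFun f} :=
  ⟨Function.update p.1.1 (Classical.choose p.2.1) p.1.2,
    conn_update _ _ _ (Classical.choose_spec p.2.1).2⟩

theorem stmt4 (n : ℕ) :
    Nat.card {p : (Fin n → Fin n) × Fin n // IsTreeFun p.1 ∧ IsRec p.1 p.2} =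
      Nat.card {f : Fin n → Fin n // ConnFun f} := by
  refine Nat.card_eq_of_bijective (phiFun n) ⟨?_, ?_⟩
  · -- injectivity
    rintro ⟨⟨f1, v1⟩, hT1, hR1⟩ ⟨⟨f2, v2⟩, hT2, hR2⟩ h
    have h' : Function.update f1 (Classical.choose hT1) v1
        = Function.update f2 (Classical.choose hT2) v2 := congrArg Subtype.val h
    set r1 := Classical.choose hT1 with hr1def
    set r2 := Classical.choose hT2 with hr2def
    obtain ⟨hr1, hreach1⟩ := Classical.choose_spec hT1
    obtain ⟨hr2, hreach2⟩ := Classical.choose_spec hT2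
    obtain ⟨⟨k1, hk1, hper1⟩, hmax1, ⟨c1, hc1, hperr1⟩⟩ := rec_max f1 r1 v1 hr1 hreach1 hR1
    obtain ⟨⟨k2, hk2, hper2⟩, hmax2, ⟨c2, hc2, hperr2⟩⟩ := rec_max f2 r2 v2 hr2 hreach2 hR2
    rw [← h'] at hper2 hmax2 hperr2
    set F := Function.update f1 r1 v1 with hFdef
    have hv : v1 = v2 :=
      le_antisymm (hmax2 v1 ⟨k1, hk1, hper1⟩) (hmax1 v2 ⟨k2, hk2, hper2⟩)
    have hFr1 : F r1 = v1 := Function.update_self r1 v1 f1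
    have hFr2 : F r2 = v2 := by rw [h']; exact Function.update_self r2 v2 f2
    have hrr : r1 = r2 :=
      periodic_inj F hc1 hc2 hperr1 hperr2 (by rw [hFr1, hFr2, hv])
    have hf : f1 = f2 := by
      funext x
      by_cases hx : x = r1
      · have h2 : f2 r1 = r1 := by rw [hrr]; exact hr2
        rw [hx]
        exact hr1.trans h2.symm
      · have e1 : F x = f1 x := Function.update_of_ne hx v1 f1
        have e2 : F x = f2 x := by
          have hx2 : x ≠ r2 := by rw [← hrr]; exact hx
          rw [h']
          exact Function.update_of_ne hx2 v2 f2
        rw [← e1, e2]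
    exact Subtype.ext (Prod.ext hf hv)
  · -- surjectivity
    rintro ⟨F, hNE, hconn⟩
    obtain ⟨x0⟩ := hNE
    -- a periodic point exists
    have hper : ∃ p : Fin n, ∃ c, 0 < c ∧ F^[c] p = p := by
      obtain ⟨a, b, hab, heq⟩ := Finite.exists_ne_map_eq_of_infinite (fun k : ℕ => F^[k] x0)
      rcases hab.lt_or_gt with hlt | hlt
      · exact ⟨F^[a] x0, b - a, by omega, by
          rw [← Function.iterate_add_apply, Nat.sub_add_cancel hlt.le, ← heq]⟩
      · exact ⟨F^[b] x0, a - b, by omega, by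
          rw [← Function.iterate_add_apply, Nat.sub_add_cancel hlt.le, heq]⟩
    set S : Set (Fin n) := {x | ∃ c, 0 < c ∧ F^[c] x = x} with hSdef
    obtain ⟨m, hmS, hmax⟩ := Set.Finite.exists_maximalFor id S (Set.toFinite S) hper
    have hle : ∀ a ∈ S, a ≤ m := by
      intro a ha
      rcases le_total a m with h | h
      · exact h
      · exact hmax ha h
    obtain ⟨km, hkm, hFkm⟩ := hmS
    set r := F^[km - 1] m with hrdef
    have hkm1 : (km - 1) + 1 = km := Nat.succ_pred_eq_of_pos hkm
    have hFr : F r = m := by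
      have hh : F^[(km - 1) + 1] m = F (F^[km - 1] m) :=
        Function.iterate_succ_apply' F (km - 1) m
      rw [hrdef, ← hh, hkm1, hFkm]
    have hrper : F^[km] r = r := by
      calc F^[km] (F^[km - 1] m) = F^[km + (km - 1)] m :=
            (Function.iterate_add_apply ..).symm
        _ = F^[(km - 1) + km] m := by rw [Nat.add_comm]
        _ = F^[km - 1] (F^[km] m) := Function.iterate_add_apply ..
        _ = r := by rw [hFkm]
    have reachM : ∀ x, ∃ j, F^[j] x = m := by
      intro x
      obtain ⟨a, b, hab⟩ := eqvgen_iter F (hconn x m)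
      have hble : b ≤ b * km := Nat.le_mul_of_pos_right b hkm
      refine ⟨(b * km - b) + a, ?_⟩
      rw [Function.iterate_add_apply, hab, ← Function.iterate_add_apply,
        Nat.sub_add_cancel hble, mul_comm, Function.iterate_mul]
      exact Function.iterate_fixed hFkm b
    have reachR : ∀ x, ∃ j, F^[j] x = r := by
      intro x
      obtain ⟨j, hj⟩ := reachM x
      exact ⟨(km - 1) + j, by rw [Function.iterate_add_apply, hj]⟩
    set f := Function.update F r r with hfdef
    have hfr : f r = r := Function.update_self r r F
    have hfne : ∀ y, y ≠ r → f y = F y := fun y hy => Function.update_of_ne hy r F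
    have hTree : IsTreeFun f := by
      refine ⟨r, hfr, fun x => ?_⟩
      obtain ⟨j, hj⟩ := reachR x
      exact iter_reach F f r (fun y hy => (hfne y hy).symm) j x hj
    have hRec : IsRec f m := by
      have per : ∀ j, f^[j] m ∈ S := by
        intro j
        induction j with
        | zero => exact ⟨km, hkm, hFkm⟩
        | succ j ih =>
          obtain ⟨c, hc, hcy⟩ := ih
          rw [Function.iterate_succ_apply']
          by_cases hy : f^[j] m = r
          · rw [hy, hfr]
            exact ⟨km, hkm, hrper⟩
          · rw [hfne _ hy]
            refine ⟨c, hc, ?_⟩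
            rw [← Function.iterate_succ_apply, Function.iterate_succ_apply', hcy]
      exact fun j => hle _ (per j)
    refine ⟨⟨⟨f, m⟩, hTree, hRec⟩, ?_⟩
    apply Subtype.ext
    show Function.update f (Classical.choose hTree) m = F
    obtain ⟨hρfix, hρreach⟩ := Classical.choose_spec hTree
    set ρ := Classical.choose hTree with hρdef
    have hρr : ρ = r := by
      obtain ⟨k, hk⟩ := hρreach r
      rw [Function.iterate_fixed hfr k] at hk
      exact hk.symm
    rw [hρr]
    funext x
    by_cases hx : x = r
    · rw [hx, Function.update_self, ← hFr]
    · rw [Function.update_of_ne hx m f, hfne x hx]
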